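/- Let G be a finite group with a nontrivial near-factorization (A, B), and suppose there is a surjective group homomorphism from G onto a finite abelian group H whose exponent divides 4 or divides 6. Then |A| ≥ |H| − 1. -/

import Mathlib

open Finset Complex
open scoped Pointwise

/-- A pair `(A, B)` of subsets of a finite group `G` is a near-factorization of `G`
if `|A| * |B| = |G| - 1` and `A * B = G \ {e}`.  It is nontrivial if `|A| > 1` and `|B| > 1`. -/
def IsNontrivialNearFactorization {G : Type*} [Group G] [Fintype G] [DecidableEq G]
    (A B : Finset G) : Prop :=
  A.card * B.card = Fintype.card G - 1 ∧ A * B = Finset.univ \ {1} ∧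
    1 < A.card ∧ 1 < B.card



noncomputable section NFAux

/-- primitive cube root of unity -/
def nfZeta : ℂ := ⟨-1/2, Real.sqrt 3 / 2⟩

lemma nfZeta_rel : nfZeta ^ 2 + nfZeta + 1 = 0 := by
  have h3 : (Real.sqrt 3 : ℝ) ^ 2 = 3 := Real.sq_sqrt (by norm_num)
  apply Complex.ext <;>
    simp [nfZeta, pow_two, Complex.mul_re, Complex.mul_im] <;> nlinarith [h3]

lemma nfZeta_conj : (starRingEnd ℂ) nfZeta = -1 - nfZeta := by
  apply Complex.ext <;> simp [nfZeta] <;> ring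

def IsIntComb (μ z : ℂ) : Prop := ∃ x y : ℤ, z = x + y * μ

lemma IsIntComb.sum {μ : ℂ} {ι : Type*} (s : Finset ι) (c : ι → ℂ)
    (hc : ∀ i ∈ s, IsIntComb μ (c i)) : IsIntComb μ (∑ i ∈ s, c i) := by
  refine Finset.sum_induction c (IsIntComb μ) ?_ ⟨0, 0, by simp⟩ hc
  rintro a b ⟨x, y, rfl⟩ ⟨x', y', rfl⟩
  exact ⟨x + x', y + y', by push_cast; ring⟩

lemma isIntComb_of_pow4 {z : ℂ} (hz : z ^ 4 = 1) : IsIntComb I z := by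
  have h : (z - 1) * ((z + 1) * ((z - I) * (z + I))) = 0 := by
    linear_combination hz + (1 - z ^ 2) * Complex.I_sq
  rcases mul_eq_zero.1 h with h1 | h
  · exact ⟨1, 0, by push_cast; linear_combination h1⟩
  rcases mul_eq_zero.1 h with h1 | h
  · exact ⟨-1, 0, by push_cast; linear_combination h1⟩
  rcases mul_eq_zero.1 h with h1 | h1
  · exact ⟨0, 1, by push_cast; linear_combination h1⟩
  · exact ⟨0, -1, by push_cast; linear_combination h1⟩

lemma isIntComb_of_pow3 {z : ℂ} (hz : z ^ 3 = 1) : IsIntComb nfZeta z := by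
  have h : (z - 1) * ((z - nfZeta) * (z + 1 + nfZeta)) = 0 := by
    linear_combination hz - (z - 1) * nfZeta_rel
  rcases mul_eq_zero.1 h with h1 | h
  · exact ⟨1, 0, by push_cast; linear_combination h1⟩
  rcases mul_eq_zero.1 h with h1 | h1
  · exact ⟨0, 1, by push_cast; linear_combination h1⟩
  · exact ⟨-1, -1, by push_cast; linear_combination h1⟩

lemma isIntComb_of_pow6 {z : ℂ} (hz : z ^ 6 = 1) : IsIntComb nfZeta z := by
  have h : (z ^ 3 - 1) * (z ^ 3 + 1) = 0 := by linear_combination hz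
  rcases mul_eq_zero.1 h with h1 | h1
  · exact isIntComb_of_pow3 (by linear_combination h1)
  · obtain ⟨x, y, hxy⟩ := isIntComb_of_pow3 (z := -z) (by linear_combination -h1)
    exact ⟨-x, -y, by push_cast; linear_combination -hxy⟩

lemma normInt4 {z : ℂ} (h : IsIntComb I z) : ∃ n : ℤ, z * (starRingEnd ℂ) z = n := by
  obtain ⟨x, y, rfl⟩ := h
  refine ⟨x ^ 2 + y ^ 2, ?_⟩
  simp only [map_add, map_mul, Complex.conj_I, map_intCast]
  push_cast
  linear_combination (-(y:ℂ) ^ 2) * Complex.I_sq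

lemma normInt6 {z : ℂ} (h : IsIntComb nfZeta z) : ∃ n : ℤ, z * (starRingEnd ℂ) z = n := by
  obtain ⟨x, y, rfl⟩ := h
  refine ⟨x ^ 2 - x * y + y ^ 2, ?_⟩
  simp only [map_add, map_mul, nfZeta_conj, map_intCast]
  push_cast
  linear_combination (-(y:ℂ) ^ 2) * nfZeta_rel

lemma sum_char_eq_zero {K : Type*} [Group K] [Fintype K] (ψ : K →* ℂˣ) {x : K}
    (hx : ψ x ≠ 1) : ∑ g : K, ((ψ g : ℂˣ) : ℂ) = 0 := by
  have h1 : ∑ i : K, ((ψ (x * i) : ℂˣ) : ℂ) = ∑ i : K, ((ψ i : ℂˣ) : ℂ) :=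
    Fintype.sum_equiv (Equiv.mulLeft x) _ _ (fun i => rfl)
  have h2 : ∑ i : K, ((ψ (x * i) : ℂˣ) : ℂ) = (ψ x : ℂ) * ∑ i : K, ((ψ i : ℂˣ) : ℂ) := by
    rw [Finset.mul_sum]
    exact Finset.sum_congr rfl fun i _ => by rw [map_mul, Units.val_mul]
  have hx' : ((ψ x : ℂˣ) : ℂ) ≠ 1 := fun hc => hx (Units.ext (by simpa using hc))
  have := h2.symm.trans h1
  have h3 : (((ψ x : ℂˣ) : ℂ) - 1) * ∑ i : K, ((ψ i : ℂˣ) : ℂ) = 0 := by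
    linear_combination this
  rcases mul_eq_zero.1 h3 with h | h
  · exact absurd (by linear_combination h) hx'
  · exact h

end NFAux

theorem card_ge_of_quotient_small_exponent {G : Type*} [Group G] [Fintype G] [DecidableEq G]
    {H : Type*} [CommGroup H] [Fintype H]
    (A B : Finset G) (h : IsNontrivialNearFactorization A B)
    (f : G →* H) (hf : Function.Surjective f)
    (hexp : Monoid.exponent H ∣ 4 ∨ Monoid.exponent H ∣ 6) :
    Fintype.card H - 1 ≤ A.card := by
  classical
  obtain ⟨hcard, hAB, hA1, hB1⟩ := h
  obtain ⟨k, hk46, hk⟩ : ∃ k : ℕ, (k = 4 ∨ k = 6) ∧ ∀ a : H, a ^ k = 1 := by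
    rcases hexp with hd | hd
    · exact ⟨4, Or.inl rfl, fun a =>
        orderOf_dvd_iff_pow_eq_one.mp ((Monoid.order_dvd_exponent a).trans hd)⟩
    · exact ⟨6, Or.inr rfl, fun a =>
        orderOf_dvd_iff_pow_eq_one.mp ((Monoid.order_dvd_exponent a).trans hd)⟩
  have hk0 : k ≠ 0 := by rcases hk46 with rfl | rfl <;> norm_num
  obtain ⟨μ, hμ1, hμ2⟩ : ∃ μ : ℂ, (∀ z : ℂ, z ^ k = 1 → IsIntComb μ z) ∧
      (∀ z : ℂ, IsIntComb μ z → ∃ n : ℤ, z * (starRingEnd ℂ) z = n) := by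
    rcases hk46 with rfl | rfl
    · exact ⟨I, fun z hz => isIntComb_of_pow4 hz, fun z hz => normInt4 hz⟩
    · exact ⟨nfZeta, fun z hz => isIntComb_of_pow6 hz, fun z hz => normInt6 hz⟩
  -- duality setup
  have hne : NeZero ((Monoid.exponent H : ℂ)) :=
    ⟨Nat.cast_ne_zero.mpr Monoid.exponent_ne_zero_of_finite⟩
  have hfinD : Finite (H →* ℂˣ) := by
    obtain ⟨e⟩ := CommGroup.monoidHom_mulEquiv_of_hasEnoughRootsOfUnity H ℂ
    exact Finite.of_equiv H e.toEquiv.symm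
  have : Fintype (H →* ℂˣ) := Fintype.ofFinite _
  have hcardD : Fintype.card (H →* ℂˣ) = Fintype.card H := by
    obtain ⟨e⟩ := CommGroup.monoidHom_mulEquiv_of_hasEnoughRootsOfUnity H ℂ
    exact Fintype.card_congr e.toEquiv
  -- second orthogonality
  have hsep : ∀ y : H, y ≠ 1 → ∑ χ : H →* ℂˣ, ((χ y : ℂˣ) : ℂ) = 0 := by
    intro y hy
    obtain ⟨χ₀, hχ₀⟩ := CommGroup.exists_apply_ne_one_of_hasEnoughRootsOfUnity H ℂ (a := y) hy
    exact sum_char_eq_zero (MonoidHom.mk' (fun χ : H →* ℂˣ => χ y) (fun a b => by simp)) hχ₀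
  -- first orthogonality composed with f
  have horthG : ∀ χ : H →* ℂˣ, χ ≠ 1 → ∑ g : G, ((χ (f g) : ℂˣ) : ℂ) = 0 := by
    intro χ hχ
    have hex : ∃ a : H, χ a ≠ 1 := by
      by_contra hcon
      push_neg at hcon
      exact hχ (MonoidHom.ext fun a => hcon a)
    obtain ⟨a, ha⟩ := hex
    obtain ⟨g0, rfl⟩ := hf a
    simpa using sum_char_eq_zero (χ.comp f) ha
  set S : (H →* ℂˣ) → ℂ := fun χ => ∑ a ∈ A, ((χ (f a) : ℂˣ) : ℂ) with hSdef
  set T : (H →* ℂˣ) → ℂ := fun χ => ∑ b ∈ B, ((χ (f b) : ℂˣ) : ℂ) with hTdef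
  -- the product map is injective on A ×ˢ B
  have hinj : ∀ x ∈ A ×ˢ B, ∀ y ∈ A ×ˢ B, x.1 * x.2 = y.1 * y.2 → x = y := by
    have hcard2 : ((A ×ˢ B).image fun p : G × G => p.1 * p.2).card = (A ×ˢ B).card := by
      rw [Finset.image_mul_product, hAB, Finset.card_product, hcard,
        Finset.card_sdiff_of_subset (Finset.singleton_subset_iff.mpr (Finset.mem_univ 1))]
      simp [Finset.card_univ]
    have hio := Finset.card_image_iff.mp hcard2
    intro x hx y hy hxy
    exact hio (Finset.mem_coe.mpr hx) (Finset.mem_coe.mpr hy) hxy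
  have hsum_prod : ∀ φ : G → ℂ, ∑ p ∈ A ×ˢ B, φ (p.1 * p.2) = ∑ g ∈ univ \ {1}, φ g := by
    intro φ
    rw [← hAB, ← Finset.image_mul_product]
    exact (Finset.sum_image hinj).symm
  have hST : ∀ χ : H →* ℂˣ, χ ≠ 1 → S χ * T χ = -1 := by
    intro χ hχ
    have h1 : S χ * T χ = ∑ p ∈ A ×ˢ B, ((χ (f (p.1 * p.2)) : ℂˣ) : ℂ) := by
      simp only [hSdef, hTdef]
      rw [Finset.sum_mul_sum, Finset.sum_product]
      refine Finset.sum_congr rfl fun a _ => Finset.sum_congr rfl fun b _ => ?_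
      rw [map_mul, map_mul, Units.val_mul]
    rw [h1]
    calc ∑ p ∈ A ×ˢ B, ((χ (f (p.1 * p.2)) : ℂˣ) : ℂ)
        = ∑ g ∈ univ \ {1}, ((χ (f g) : ℂˣ) : ℂ) :=
          hsum_prod (fun g => ((χ (f g) : ℂˣ) : ℂ))
      _ = -1 := by
          rw [Finset.sum_sdiff_eq_sub (Finset.singleton_subset_iff.mpr (Finset.mem_univ 1)),
            horthG χ hχ]
          simp
  -- character values are k-th roots of unity
  have hpow : ∀ h0 : H, ∀ χ : H →* ℂˣ, ((χ h0 : ℂˣ) : ℂ) ^ k = 1 := by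
    intro h0 χ
    rw [← Units.val_pow_eq_pow_val, ← map_pow, hk h0, map_one, Units.val_one]
  have hconj : ∀ h0 : H, ∀ χ : H →* ℂˣ,
      (starRingEnd ℂ) ((χ h0 : ℂˣ) : ℂ) = ((χ h0⁻¹ : ℂˣ) : ℂ) := by
    intro h0 χ
    have h1 : ((χ h0 : ℂˣ) : ℂ) ^ k = 1 := hpow h0 χ
    have h2 : Complex.normSq ((χ h0 : ℂˣ) : ℂ) = 1 := by
      have h3 : Complex.normSq ((χ h0 : ℂˣ) : ℂ) ^ k = 1 := by
        rw [← map_pow, h1, map_one]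
      have h4 : 0 ≤ Complex.normSq ((χ h0 : ℂˣ) : ℂ) := Complex.normSq_nonneg _
      rcases lt_trichotomy (Complex.normSq ((χ h0 : ℂˣ) : ℂ)) 1 with hlt | heq | hgt
      · have := pow_lt_one₀ h4 hlt hk0
        linarith
      · exact heq
      · have := one_lt_pow₀ hgt hk0
        linarith
    have h5 : ((χ h0 : ℂˣ) : ℂ) * (starRingEnd ℂ) ((χ h0 : ℂˣ) : ℂ) = 1 := by
      rw [Complex.mul_conj, h2, Complex.ofReal_one]
    have h6 : ((χ h0 : ℂˣ) : ℂ) * ((χ h0⁻¹ : ℂˣ) : ℂ) = 1 := by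
      rw [← Units.val_mul, ← map_mul]
      simp
    exact mul_left_cancel₀ (Units.ne_zero _) (h5.trans h6.symm)
  -- integrality of the norms
  have hIC : ∀ (s : Finset G) (χ : H →* ℂˣ),
      IsIntComb μ (∑ a ∈ s, ((χ (f a) : ℂˣ) : ℂ)) :=
    fun s χ => IsIntComb.sum s _ (fun a _ => hμ1 _ (hpow (f a) χ))
  have hSnormOne : ∀ χ : H →* ℂˣ, χ ≠ 1 → S χ * (starRingEnd ℂ) (S χ) = 1 := by
    intro χ hχ
    obtain ⟨n, hn⟩ := hμ2 _ (hIC A χ)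
    obtain ⟨m, hm⟩ := hμ2 _ (hIC B χ)
    have hn' : S χ * (starRingEnd ℂ) (S χ) = (n : ℂ) := hn
    have hm' : T χ * (starRingEnd ℂ) (T χ) = (m : ℂ) := hm
    have hprod : (n : ℂ) * m = 1 := by
      rw [← hn', ← hm']
      have hst := hST χ hχ
      calc S χ * (starRingEnd ℂ) (S χ) * (T χ * (starRingEnd ℂ) (T χ))
          = (S χ * T χ) * (starRingEnd ℂ) (S χ * T χ) := by rw [map_mul]; ring
        _ = 1 := by rw [hst]; simp
    have hnm : n * m = 1 := by exact_mod_cast hprod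
    have hn0 : (0 : ℤ) ≤ n := by
      have h2 : (n : ℂ) = ((Complex.normSq (S χ) : ℝ) : ℂ) := by
        rw [← hn', Complex.mul_conj]
      have h3 : (n : ℝ) = Complex.normSq (S χ) := by exact_mod_cast h2
      have h4 := Complex.normSq_nonneg (S χ)
      exact_mod_cast h3 ▸ h4
    rcases Int.mul_eq_one_iff_eq_one_or_neg_one.mp hnm with ⟨h1, _⟩ | ⟨h1, _⟩
    · rw [hn', h1]; norm_num
    · omega
  -- Parseval
  set Q := ((A ×ˢ A).filter fun p : G × G => f p.1 = f p.2).card with hQdef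
  have hpar : ∑ χ : H →* ℂˣ, S χ * (starRingEnd ℂ) (S χ)
      = (Fintype.card (H →* ℂˣ) : ℂ) * (Q : ℂ) := by
    have hterm : ∀ χ : H →* ℂˣ, S χ * (starRingEnd ℂ) (S χ)
        = ∑ p ∈ A ×ˢ A, ((χ (f p.1 * (f p.2)⁻¹) : ℂˣ) : ℂ) := by
      intro χ
      simp only [hSdef]
      rw [map_sum, Finset.sum_mul_sum, Finset.sum_product]
      refine Finset.sum_congr rfl fun a _ => Finset.sum_congr rfl fun b _ => ?_
      rw [hconj (f b) χ, map_mul, Units.val_mul]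
    rw [Finset.sum_congr rfl fun χ _ => hterm χ, Finset.sum_comm]
    have hin : ∀ p ∈ A ×ˢ A, ∑ χ : H →* ℂˣ, ((χ (f p.1 * (f p.2)⁻¹) : ℂˣ) : ℂ)
        = if f p.1 = f p.2 then (Fintype.card (H →* ℂˣ) : ℂ) else 0 := by
      intro p hp
      by_cases hfp : f p.1 = f p.2
      · rw [if_pos hfp, mul_inv_eq_one.mpr hfp]
        simp [Finset.card_univ]
      · rw [if_neg hfp]
        exact hsep _ (by simpa [mul_inv_eq_one] using hfp)
    rw [Finset.sum_congr rfl hin, Finset.sum_ite, Finset.sum_const, Finset.sum_const_zero,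
      add_zero, nsmul_eq_mul, mul_comm]
  -- the trivial character term
  have hS1 : S 1 = (A.card : ℂ) := by simp [hSdef]
  have hL : ∑ χ : H →* ℂˣ, S χ * (starRingEnd ℂ) (S χ)
      = (A.card : ℂ) ^ 2 + ((Fintype.card (H →* ℂˣ) - 1 : ℕ) : ℂ) := by
    rw [← Finset.add_sum_erase _ _ (Finset.mem_univ (1 : H →* ℂˣ))]
    have hrest : ∑ χ ∈ (univ : Finset (H →* ℂˣ)).erase 1, S χ * (starRingEnd ℂ) (S χ)
        = ((Fintype.card (H →* ℂˣ) - 1 : ℕ) : ℂ) := by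
      rw [Finset.sum_congr rfl (fun χ hχ => hSnormOne χ (Finset.ne_of_mem_erase hχ)),
        Finset.sum_const, Finset.card_erase_of_mem (Finset.mem_univ _), Finset.card_univ]
      simp
    rw [hS1, hrest, map_natCast]
    ring
  have hfinal : (A.card : ℂ) ^ 2 + ((Fintype.card (H →* ℂˣ) - 1 : ℕ) : ℂ)
      = (Fintype.card (H →* ℂˣ) : ℂ) * (Q : ℂ) := by rw [← hL, hpar]
  have hnat : A.card ^ 2 + (Fintype.card (H →* ℂˣ) - 1) = Fintype.card (H →* ℂˣ) * Q := by
    exact_mod_cast hfinal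
  have hQA : A.card ≤ Q := by
    apply Finset.card_le_card_of_injOn (fun a => (a, a))
    · intro a ha
      simp [Finset.mem_filter, Finset.mem_product, Finset.mem_coe.mp ha]
    · intro a _ b _ hab
      simpa using congrArg Prod.fst hab
  rw [hcardD] at hnat
  have hm1 : 1 ≤ Fintype.card H := Fintype.card_pos
  have h' : A.card ^ 2 + Fintype.card H = Fintype.card H * Q + 1 := by
    rw [← hnat, add_assoc, Nat.sub_add_cancel hm1]
  by_contra hcon
  push_neg at hcon
  have ha2 : 2 ≤ A.card := hA1
  have hm2 : A.card + 2 ≤ Fintype.card H := by omega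
  have h2 : Fintype.card H * A.card ≤ Fintype.card H * Q := Nat.mul_le_mul_left _ hQA
  have key : Fintype.card H * A.card + 1 ≤ A.card ^ 2 + Fintype.card H := by
    calc Fintype.card H * A.card + 1 ≤ Fintype.card H * Q + 1 := by
          exact Nat.add_le_add_right h2 1
      _ = A.card ^ 2 + Fintype.card H := h'.symm
  have key' : (Fintype.card H : ℤ) * A.card + 1 ≤ (A.card : ℤ) ^ 2 + Fintype.card H := by
    exact_mod_cast key
  have ha2' : (2 : ℤ) ≤ A.card := by exact_mod_cast ha2
  have hm2' : (A.card : ℤ) + 2 ≤ Fintype.card H := by exact_mod_cast hm2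
  nlinarith [key', ha2', hm2',
    mul_pos (by linarith : (0:ℤ) < (Fintype.card H : ℤ) - A.card - 1)
      (by linarith : (0:ℤ) < (A.card : ℤ) - 1)]
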